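/- Let $b\colon\Psi\to\Phi$ and $a\colon\Phi\to\Psi$ be homomorphisms of abelian groups. For $n\ge 0$ define $t_n\colon \Psi^{\oplus n}\oplus\Phi \to \Psi^{\oplus n}\oplus\Phi$ by $t_n(\psi_1,\dots,\psi_n,\varphi) = (-\psi_1-\cdots-\psi_n + a(\varphi),\, \psi_1,\dots,\psi_{n-1},\, \varphi - b(\psi_n))$. Then $t_n^{n+1} = T_\Psi^{\oplus n}\oplus T_\Phi$, where $T_\Psi = \mathrm{id}-ab$ and $T_\Phi = \mathrm{id}-ba$. -/

import Mathlib

/-- The paracyclic rotation operator `t_n` on `N_n = Ψ^{⊕n} ⊕ Φ`: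
`t_n(ψ₁,…,ψ_n; φ) = (-ψ₁-⋯-ψ_n + a φ, ψ₁,…,ψ_{n-1}; φ - b ψ_n)`
(for `n = 0` it is `φ ↦ φ - b (a φ)`). -/
def paraRot {Φ Ψ : Type*} [AddCommGroup Φ] [AddCommGroup Ψ]
    (a : Φ →+ Ψ) (b : Ψ →+ Φ) (n : ℕ) :
    ((Fin n → Ψ) × Φ) → ((Fin n → Ψ) × Φ) :=
  fun p =>
    if h : 0 < n then
      (fun k => if (k : ℕ) = 0 then -(∑ i, p.1 i) + a p.2
        else p.1 ⟨(k : ℕ) - 1, by have := k.isLt; omega⟩,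
       p.2 - b (p.1 ⟨n - 1, by omega⟩))
    else (p.1, p.2 - b (a p.2))

section Aux

variable {Φ Ψ : Type*} [AddCommGroup Φ] [AddCommGroup Ψ] (a : Φ →+ Ψ) (b : Ψ →+ Φ)

/-- The twisted rotation on ℕ-indexed tuples: rotate the first `n+1` entries one step
to the right, applying `id - a∘b` to the entry that wraps around, and subtract
`b` of the wrapping entry from the `Φ` component. -/
def twistRot (n : ℕ) : ((ℕ → Ψ) × Φ) → ((ℕ → Ψ) × Φ) :=
  fun p => (fun i => if i = 0 then p.1 n - a (b (p.1 n)) else p.1 (i - 1),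
    p.2 - b (p.1 n))

/-- Embed `Ψ^{⊕n} ⊕ Φ` into ℕ-indexed tuples, prepending the balancing entry
`x₀ = a φ - ∑ ψᵢ`. -/
def embRot (n : ℕ) (p : (Fin n → Ψ) × Φ) : (ℕ → Ψ) × Φ :=
  (fun i => if i = 0 then a p.2 - ∑ j, p.1 j
    else if h : i - 1 < n then p.1 ⟨i - 1, h⟩ else 0, p.2)

variable {m n : ℕ}

lemma paraRot_fst_zero (p : (Fin (m + 1) → Ψ) × Φ) (j : Fin (m + 1)) (hj : (j : ℕ) = 0) :
    (paraRot a b (m + 1) p).1 j = -(∑ i, p.1 i) + a p.2 := by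
  simp only [paraRot, dif_pos (Nat.succ_pos m)]
  rw [if_pos hj]

lemma paraRot_fst_pos (p : (Fin (m + 1) → Ψ) × Φ) (j : Fin (m + 1)) (hj : (j : ℕ) ≠ 0)
    (h' : (j : ℕ) - 1 < m + 1) :
    (paraRot a b (m + 1) p).1 j = p.1 ⟨(j : ℕ) - 1, h'⟩ := by
  simp only [paraRot, dif_pos (Nat.succ_pos m)]
  rw [if_neg hj]

lemma paraRot_snd (p : (Fin (m + 1) → Ψ) × Φ) :
    (paraRot a b (m + 1) p).2 = p.2 - b (p.1 (Fin.last m)) := by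
  simp only [paraRot, dif_pos (Nat.succ_pos m)]
  rw [show (⟨m + 1 - 1, by omega⟩ : Fin (m + 1)) = Fin.last m from Fin.ext (by simp)]

lemma embRot_fst_zero (p : (Fin n → Ψ) × Φ) :
    (embRot a n p).1 0 = a p.2 - ∑ j, p.1 j := rfl

lemma embRot_fst_pos (p : (Fin n → Ψ) × Φ) (i : ℕ) (hi : i ≠ 0) (h' : i - 1 < n) :
    (embRot a n p).1 i = p.1 ⟨i - 1, h'⟩ := by
  simp only [embRot]
  rw [if_neg hi, dif_pos h']

lemma embRot_snd (p : (Fin n → Ψ) × Φ) : (embRot a n p).2 = p.2 := rfl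

lemma twistRot_fst_zero (q : (ℕ → Ψ) × Φ) :
    (twistRot a b n q).1 0 = q.1 n - a (b (q.1 n)) := rfl

lemma twistRot_fst_pos (q : (ℕ → Ψ) × Φ) (i : ℕ) (hi : i ≠ 0) :
    (twistRot a b n q).1 i = q.1 (i - 1) := by
  simp only [twistRot]
  rw [if_neg hi]

lemma twistRot_snd (q : (ℕ → Ψ) × Φ) :
    (twistRot a b n q).2 = q.2 - b (q.1 n) := rfl

/-- `twistRot` only depends on the entries with index `≤ n` (and the `Φ` part). -/
lemma twistRot_congr (q r : (ℕ → Ψ) × Φ)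
    (h1 : ∀ i ≤ n, q.1 i = r.1 i) (h2 : q.2 = r.2) :
    (∀ i ≤ n, (twistRot a b n q).1 i = (twistRot a b n r).1 i) ∧
      (twistRot a b n q).2 = (twistRot a b n r).2 := by
  constructor
  · intro i hi
    rcases Nat.eq_zero_or_pos i with h | h
    · subst h
      rw [twistRot_fst_zero, twistRot_fst_zero, h1 n le_rfl]
    · rw [twistRot_fst_pos a b q i (by omega), twistRot_fst_pos a b r i (by omega),
        h1 (i - 1) (by omega)]
  · rw [twistRot_snd, twistRot_snd, h2, h1 n le_rfl]

/-- Closed form for the iterates of `twistRot` (on indices `≤ n`). -/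
lemma twistRot_iterate (x : ℕ → Ψ) (φ : Φ) (k : ℕ) (hk : k ≤ n + 1) :
    (∀ i ≤ n, ((twistRot a b n)^[k] (x, φ)).1 i =
      if i < k then x (i + n + 1 - k) - a (b (x (i + n + 1 - k))) else x (i - k)) ∧
    ((twistRot a b n)^[k] (x, φ)).2 =
      φ - b (∑ j ∈ Finset.Ico (n + 1 - k) (n + 1), x j) := by
  induction k with
  | zero => simp
  | succ k ih =>
    have hk' : k ≤ n := by omega
    obtain ⟨ih1, ih2⟩ := ih (by omega)
    rw [Function.iterate_succ_apply']
    have hn' : ((twistRot a b n)^[k] (x, φ)).1 n = x (n - k) := by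
      rw [ih1 n le_rfl, if_neg (by omega)]
    constructor
    · intro i hi
      rcases Nat.eq_zero_or_pos i with h | h
      · subst h
        rw [twistRot_fst_zero, hn', if_pos (by omega),
          show 0 + n + 1 - (k + 1) = n - k by omega]
      · rw [twistRot_fst_pos a b _ i (by omega), ih1 (i - 1) (by omega)]
        by_cases hik : i < k + 1
        · rw [if_pos (by omega), if_pos hik,
            show i - 1 + n + 1 - k = i + n + 1 - (k + 1) by omega]
        · rw [if_neg (by omega), if_neg hik, show i - 1 - k = i - (k + 1) by omega]
    · rw [twistRot_snd, ih2, hn',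
        show n + 1 - (k + 1) = n - k by omega,
        Finset.sum_eq_sum_Ico_succ_bot (show n - k < n + 1 by omega),
        show n - k + 1 = n + 1 - k by omega, map_add]
      abel

/-- One-step conjugation: `embRot` intertwines `paraRot` and `twistRot`
(on indices `≤ n`). -/
lemma embRot_paraRot (p : (Fin (m + 1) → Ψ) × Φ) :
    (∀ i ≤ m + 1,
        (embRot a (m + 1) (paraRot a b (m + 1) p)).1 i =
          (twistRot a b (m + 1) (embRot a (m + 1) p)).1 i) ∧
      (embRot a (m + 1) (paraRot a b (m + 1) p)).2 =
        (twistRot a b (m + 1) (embRot a (m + 1) p)).2 := by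
  have hemb_top : (embRot a (m + 1) p).1 (m + 1) = p.1 (Fin.last m) := by
    rw [embRot_fst_pos a p (m + 1) (by omega) (by omega)]
    congr 1
  constructor
  · intro i hi
    rcases Nat.eq_zero_or_pos i with h | h
    · -- index 0 : the new balancing entry
      subst h
      rw [embRot_fst_zero, twistRot_fst_zero, hemb_top, paraRot_snd]
      have hsum : (∑ j, (paraRot a b (m + 1) p).1 j) =
          (-(∑ i, p.1 i) + a p.2) + (∑ i, p.1 i - p.1 (Fin.last m)) := by
        rw [Fin.sum_univ_succ, paraRot_fst_zero a b p 0 rfl]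
        congr 1
        have key : ∀ j : Fin m,
            (paraRot a b (m + 1) p).1 j.succ = p.1 j.castSucc := by
          intro j
          rw [paraRot_fst_pos a b p j.succ (by simp) (by have := j.isLt; omega)]
          exact congrArg p.1 (Fin.ext (by simp))
        rw [Finset.sum_congr rfl fun j _ => key j, eq_sub_iff_add_eq]
        exact (Fin.sum_univ_castSucc (f := p.1)).symm
      rw [hsum, map_sub]
      abel
    · -- positive indices : shifted entries
      rw [twistRot_fst_pos a b _ i (by omega),
        embRot_fst_pos a _ i (by omega) (by omega)]
      rcases eq_or_lt_of_le (Nat.succ_le_of_lt h) with h1 | h1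
      · subst h1
        rw [paraRot_fst_zero a b p _ rfl, embRot_fst_zero]
        abel
      · rw [paraRot_fst_pos a b p _ (by simp; omega)
          (by simp; omega), embRot_fst_pos a p (i - 1) (by omega) (by omega)]
  · rw [embRot_snd, twistRot_snd, embRot_snd, paraRot_snd, hemb_top]

/-- Iterated conjugation. -/
lemma embRot_paraRot_iterate (p : (Fin (m + 1) → Ψ) × Φ) (k : ℕ) :
    (∀ i ≤ m + 1,
        (embRot a (m + 1) ((paraRot a b (m + 1))^[k] p)).1 i =
          ((twistRot a b (m + 1))^[k] (embRot a (m + 1) p)).1 i) ∧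
      (embRot a (m + 1) ((paraRot a b (m + 1))^[k] p)).2 =
        ((twistRot a b (m + 1))^[k] (embRot a (m + 1) p)).2 := by
  induction k with
  | zero => exact ⟨fun i _ => rfl, rfl⟩
  | succ k ih =>
    obtain ⟨ih1, ih2⟩ := ih
    rw [Function.iterate_succ_apply', Function.iterate_succ_apply']
    obtain ⟨s1, s2⟩ := embRot_paraRot a b ((paraRot a b (m + 1))^[k] p)
    obtain ⟨t1, t2⟩ := twistRot_congr a b
      (embRot a (m + 1) ((paraRot a b (m + 1))^[k] p))
      ((twistRot a b (m + 1))^[k] (embRot a (m + 1) p)) ih1 ih2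
    exact ⟨fun i hi => (s1 i hi).trans (t1 i hi), s2.trans t2⟩

end Aux

/-- `t_n^{n+1} = T_Ψ^{⊕n} ⊕ T_Φ` with `T_Ψ = id - a∘b`, `T_Φ = id - b∘a`. -/
theorem paraRot_iterate {Φ Ψ : Type*} [AddCommGroup Φ] [AddCommGroup Ψ]
    (a : Φ →+ Ψ) (b : Ψ →+ Φ) (n : ℕ) (hn : 1 ≤ n) (p : (Fin n → Ψ) × Φ) :
    (paraRot a b n)^[n + 1] p =
      (fun i => p.1 i - a (b (p.1 i)), p.2 - b (a p.2)) := by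
  obtain ⟨m, rfl⟩ : ∃ m, n = m + 1 := ⟨n - 1, by omega⟩
  obtain ⟨c1, c2⟩ := embRot_paraRot_iterate a b p (m + 1 + 1)
  obtain ⟨u1, u2⟩ := twistRot_iterate a b (embRot a (m + 1) p).1
    (embRot a (m + 1) p).2 (m + 1 + 1) le_rfl
  simp only [Prod.mk.eta] at u1 u2
  have hsum : (∑ j ∈ Finset.Ico (m + 1 + 1 - (m + 1 + 1)) (m + 1 + 1),
      (embRot a (m + 1) p).1 j) = a p.2 := by
    rw [show m + 1 + 1 - (m + 1 + 1) = 0 by omega, ← Finset.range_eq_Ico,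
      Finset.sum_range_succ']
    have h1 : (∑ j ∈ Finset.range (m + 1), (embRot a (m + 1) p).1 (j + 1))
        = ∑ i, p.1 i := by
      rw [← Fin.sum_univ_eq_sum_range (fun j => (embRot a (m + 1) p).1 (j + 1)) (m + 1)]
      refine Finset.sum_congr rfl fun i _ => ?_
      rw [embRot_fst_pos a p ((i : ℕ) + 1) (by omega) (by have := i.isLt; omega)]
      exact congrArg p.1 (Fin.ext (by simp))
    rw [h1, embRot_fst_zero]
    abel
  rw [Prod.ext_iff]
  constructor
  · funext i
    have e1 : ((paraRot a b (m + 1))^[m + 1 + 1] p).1 i =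
        (embRot a (m + 1) ((paraRot a b (m + 1))^[m + 1 + 1] p)).1 ((i : ℕ) + 1) := by
      rw [embRot_fst_pos a _ ((i : ℕ) + 1) (by omega) (by have := i.isLt; omega)]
      exact (congrArg _ (Fin.ext (by simp))).symm
    rw [e1, c1 ((i : ℕ) + 1) (by have := i.isLt; omega),
      u1 ((i : ℕ) + 1) (by have := i.isLt; omega),
      if_pos (by have := i.isLt; omega),
      show (i : ℕ) + 1 + (m + 1) + 1 - (m + 1 + 1) = (i : ℕ) + 1 by omega,
      embRot_fst_pos a p ((i : ℕ) + 1) (by omega) (by have := i.isLt; omega)]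
    have : (⟨(i : ℕ) + 1 - 1, by have := i.isLt; omega⟩ : Fin (m + 1)) = i :=
      Fin.ext (by simp)
    rw [this]
  · have e2 : ((paraRot a b (m + 1))^[m + 1 + 1] p).2 =
        (embRot a (m + 1) ((paraRot a b (m + 1))^[m + 1 + 1] p)).2 := rfl
    rw [e2, c2, u2, hsum, embRot_snd]
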